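/- Let f: Y → S and g: V → Y be continuous maps of Hausdorff topological spaces. Let W ⊆ Y be an open subset whose closure W̄ is proper over S, and let U ⊆ V be an open subset whose closure Ū is proper over Y. Then the closure of U ∩ g⁻¹(W) in V is proper over S (via f ∘ g). -/

import Mathlib

/-!
STATEMENT 10: Let g : V → Y and f : Y → S be continuous maps of Hausdorff
topological spaces.  Let W ⊆ Y be an open subset whose closure W̄ is proper over
S, and let U ⊆ V be an open subset whose closure Ū is proper over Y.  Then the
closure of U ∩ g⁻¹(W) in V is proper over S via f ∘ g.
(Topological content of: W ⋐_S Y and U ⋐_Y V imply U ×_Y W ⋐_S V.) -/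

open Set

theorem closure_inter_preimage_proper_comp
    {V Y S : Type*} [TopologicalSpace V] [TopologicalSpace Y] [TopologicalSpace S]
    [T2Space V] [T2Space Y] [T2Space S]
    (g : V → Y) (hgc : Continuous g)
    (f : Y → S) (hfc : Continuous f)
    (W : Set Y) (hW : IsOpen W)
    (hWproper : IsProperMap (fun y : closure W => f y.1))
    (U : Set V) (hU : IsOpen U)
    (hUproper : IsProperMap (fun v : closure U => g v.1)) :
    IsProperMap (fun z : closure (U ∩ g ⁻¹' W) => f (g z.1)) := by
  have hsubU : closure (U ∩ g ⁻¹' W) ⊆ closure U := closure_mono inter_subset_left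
  have hsubW : ∀ z ∈ closure (U ∩ g ⁻¹' W), g z ∈ closure W := by
    intro z hz
    have h1 : g z ∈ closure (g '' (U ∩ g ⁻¹' W)) :=
      (image_closure_subset_closure_image hgc) ⟨z, hz, rfl⟩
    refine closure_mono ?_ h1
    rintro y ⟨v, ⟨_, hv⟩, rfl⟩
    exact hv
  -- the inclusion into closure U is proper
  have hinc : IsProperMap (Set.inclusion hsubU) := by
    refine isProperMap_of_comp_of_inj (continuous_inclusion hsubU)
      continuous_subtype_val ?_ Subtype.val_injective
    have : (Subtype.val ∘ Set.inclusion hsubU : closure (U ∩ g ⁻¹' W) → V)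
        = Subtype.val := rfl
    rw [this]
    exact isClosed_closure.isProperMap_subtypeVal
  -- the corestriction of g to closure W is proper
  have hφ : IsProperMap (fun z : closure (U ∩ g ⁻¹' W) =>
      (⟨g z.1, hsubW z.1 z.2⟩ : closure W)) := by
    refine isProperMap_of_comp_of_inj ?_ continuous_subtype_val ?_ Subtype.val_injective
    · exact Continuous.subtype_mk (hgc.comp continuous_subtype_val) _
    · have : (Subtype.val ∘ fun z : closure (U ∩ g ⁻¹' W) =>
          (⟨g z.1, hsubW z.1 z.2⟩ : closure W))
          = (fun v : closure U => g v.1) ∘ Set.inclusion hsubU := rfl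
      rw [this]
      exact hUproper.comp hinc
  exact hWproper.comp hφ
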